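/- Let B₁ = [[1,0,0],[0,−1,0],[0,0,0]] and B₂ = [[2,−1,0],[−1,0,0],[0,0,0]] as real symmetric 3×3 matrices, and let M = {(xᵀB₁x, xᵀB₂x) : x ∈ ℝ³}. Then (1,1) lies in the closure of M but (1,1) ∉ M; in particular M is not closed. -/

import Mathlib

open Matrix

lemma form1_eq (x : Fin 3 → ℝ) :
    x ⬝ᵥ (!![1,0,0;0,-1,0;0,0,0] : Matrix (Fin 3) (Fin 3) ℝ) *ᵥ x
      = x 0 ^ 2 - x 1 ^ 2 := by
  simp [mulVec, dotProduct, Fin.sum_univ_three, vecHead, vecTail]; ring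

lemma form2_eq (x : Fin 3 → ℝ) :
    x ⬝ᵥ (!![2,-1,0;-1,0,0;0,0,0] : Matrix (Fin 3) (Fin 3) ℝ) *ᵥ x
      = 2 * x 0 ^ 2 - 2 * x 0 * x 1 := by
  simp [mulVec, dotProduct, Fin.sum_univ_three, vecHead, vecTail]; ring

theorem not_closed_example :
    (1, 1) ∈ closure {y : ℝ × ℝ | ∃ x : Fin 3 → ℝ,
        y = (x ⬝ᵥ (!![1,0,0;0,-1,0;0,0,0] : Matrix (Fin 3) (Fin 3) ℝ) *ᵥ x,
             x ⬝ᵥ (!![2,-1,0;-1,0,0;0,0,0] : Matrix (Fin 3) (Fin 3) ℝ) *ᵥ x)} ∧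
    (1, 1) ∉ {y : ℝ × ℝ | ∃ x : Fin 3 → ℝ,
        y = (x ⬝ᵥ (!![1,0,0;0,-1,0;0,0,0] : Matrix (Fin 3) (Fin 3) ℝ) *ᵥ x,
             x ⬝ᵥ (!![2,-1,0;-1,0,0;0,0,0] : Matrix (Fin 3) (Fin 3) ℝ) *ᵥ x)} ∧
    ¬ IsClosed {y : ℝ × ℝ | ∃ x : Fin 3 → ℝ,
        y = (x ⬝ᵥ (!![1,0,0;0,-1,0;0,0,0] : Matrix (Fin 3) (Fin 3) ℝ) *ᵥ x,
             x ⬝ᵥ (!![2,-1,0;-1,0,0;0,0,0] : Matrix (Fin 3) (Fin 3) ℝ) *ᵥ x)} := by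
  set M : Set (ℝ × ℝ) := {y : ℝ × ℝ | ∃ x : Fin 3 → ℝ,
        y = (x ⬝ᵥ (!![1,0,0;0,-1,0;0,0,0] : Matrix (Fin 3) (Fin 3) ℝ) *ᵥ x,
             x ⬝ᵥ (!![2,-1,0;-1,0,0;0,0,0] : Matrix (Fin 3) (Fin 3) ℝ) *ᵥ x)} with hM
  have hmemset : ∀ y : ℝ × ℝ, y ∈ M ↔
      ∃ x : Fin 3 → ℝ, y = (x 0 ^ 2 - x 1 ^ 2, 2 * x 0 ^ 2 - 2 * x 0 * x 1) := by
    intro y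
    simp only [hM, Set.mem_setOf_eq, form1_eq, form2_eq]
  have hnotmem : (1, 1) ∉ M := by
    rw [hmemset]
    rintro ⟨x, hx⟩
    have h1 : x 0 ^ 2 - x 1 ^ 2 = 1 := (congrArg Prod.fst hx).symm
    have h2 : 2 * x 0 ^ 2 - 2 * x 0 * x 1 = 1 := (congrArg Prod.snd hx).symm
    have h3 : (x 0 - x 1) ^ 2 = 0 := by nlinarith
    have h4 : x 0 = x 1 := by nlinarith [sq_nonneg (x 0 - x 1)]
    rw [h4] at h1; nlinarith
  have hclos : (1, 1) ∈ closure M := by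
    have hseq : ∀ n : ℕ, ((1 - (1 / (n + 1 : ℝ)) ^ 2, 1) : ℝ × ℝ) ∈ M := by
      intro n
      rw [hmemset]
      set δ : ℝ := 1 / (n + 1 : ℝ) with hδ
      have hδpos : (0 : ℝ) < δ := by positivity
      refine ⟨![1 / (2 * δ), 1 / (2 * δ) - δ, 0], ?_⟩
      have h2δ : (2 * δ) ≠ 0 := by positivity
      simp only [Matrix.cons_val_zero, Matrix.cons_val_one, Matrix.head_cons]
      refine Prod.ext ?_ ?_ <;> field_simp <;> ring
    have htend : Filter.Tendsto (fun n : ℕ => ((1 - (1 / (n + 1 : ℝ)) ^ 2, 1) : ℝ × ℝ))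
        Filter.atTop (nhds (1, 1)) := by
      refine Filter.Tendsto.prodMk_nhds ?_ tendsto_const_nhds
      have h1 : Filter.Tendsto (fun n : ℕ => (1 / (n + 1 : ℝ)) ^ 2) Filter.atTop (nhds 0) := by
        have := tendsto_one_div_add_atTop_nhds_zero_nat (𝕜 := ℝ)
        simpa using this.pow 2
      have := (tendsto_const_nhds (x := (1 : ℝ)) (f := Filter.atTop (α := ℕ))).sub h1
      simpa using this
    exact mem_closure_of_tendsto htend (Filter.Eventually.of_forall hseq)
  refine ⟨hclos, hnotmem, fun hc => hnotmem ?_⟩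
  rwa [← hc.closure_eq]
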